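/- Let L be a Lie algebra over ℤ_p, free of finite rank as a ℤ_p-module, and suppose that L/pL has trivial centre, i.e. for every u ∈ L, if ⁅u, w⁆ ∈ p·L for all w ∈ L then u ∈ p·L. Then the normalizer of L in ℚ_p⊗L equals L itself: N = L'. -/

import Mathlib

open scoped TensorProduct

private lemma padic_denom (p : ℕ) [Fact p.Prime] (c : ℚ_[p]) :
    ∃ n : ℕ, ‖(p : ℚ_[p]) ^ n * c‖ ≤ 1 := by
  by_cases hc : ‖c‖ ≤ 1
  · exact ⟨0, by simpa using hc⟩
  · have hc0 : c ≠ 0 := by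
      intro h0; rw [h0, norm_zero] at hc; exact hc zero_le_one
    set n := Int.toNat (-c.valuation) with hn
    have hn_coe : (n : ℤ) = -c.valuation := by
      rw [hn, Int.toNat_of_nonneg]
      rw [Right.nonneg_neg_iff]
      rw [Padic.norm_le_one_iff_val_nonneg, not_le] at hc
      exact hc.le
    refine ⟨n, le_of_eq ?_⟩
    rw [norm_mul, Padic.norm_p_pow, Padic.norm_eq_zpow_neg_valuation hc0, ← zpow_add',
      hn_coe, neg_add_cancel, zpow_zero]
    exact Or.inl (Nat.cast_ne_zero.mpr (NeZero.ne p))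

/-- if `L` is a `ℤ_p`-Lie algebra, free of finite rank as a
`ℤ_p`-module, such that `L/pL` has trivial centre, then the normalizer `N` of `L`
inside `ℚ_p ⊗ L` equals (the image `L'` of) `L` itself. -/
theorem stmt11 (p : ℕ) [Fact p.Prime]
    (L : Type*) [LieRing L] [LieAlgebra ℤ_[p] L]
    [Module.Free ℤ_[p] L] [Module.Finite ℤ_[p] L]
    -- `L/pL` has trivial centre
    (hcentre : ∀ u : L, (∀ w : L, ∃ z : L, ⁅u, w⁆ = (p : ℤ_[p]) • z) →
      ∃ z : L, u = (p : ℤ_[p]) • z)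
    (L' : Set (ℚ_[p] ⊗[ℤ_[p]] L)) (hL' : L' = Set.range fun a : L => (1 : ℚ_[p]) ⊗ₜ[ℤ_[p]] a) :
    {x : ℚ_[p] ⊗[ℤ_[p]] L | ∀ u ∈ L', ⁅x, u⁆ ∈ L'} = L' := by
  classical
  subst hL'
  have hp0 : (p : ℚ_[p]) ≠ 0 := Nat.cast_ne_zero.mpr (Fact.out : p.Prime).ne_zero
  set b := Module.Free.chooseBasis ℤ_[p] L with hb
  set B := b.baseChange ℚ_[p] with hB
  -- injectivity of a ↦ 1 ⊗ a
  have hinj : ∀ a a' : L, (1 : ℚ_[p]) ⊗ₜ[ℤ_[p]] a = (1 : ℚ_[p]) ⊗ₜ[ℤ_[p]] a' → a = a' := by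
    intro a a' h
    refine b.ext_elem fun i => ?_
    have h2 := congrArg (fun z => B.repr z i) h
    simp only [hB, Module.Basis.baseChange_repr_tmul, Algebra.smul_def, mul_one,
      PadicInt.algebraMap_apply] at h2
    exact Subtype.coe_injective h2
  -- bracket of pure tensors
  have hbr : ∀ u w : L, ⁅(1 : ℚ_[p]) ⊗ₜ[ℤ_[p]] u, (1 : ℚ_[p]) ⊗ₜ[ℤ_[p]] w⁆
      = (1 : ℚ_[p]) ⊗ₜ[ℤ_[p]] ⁅u, w⁆ := by
    intro u w
    rw [LieAlgebra.ExtendScalars.bracket_tmul, mul_one]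
  -- scalar multiplication of pure tensors
  have hsm : ∀ (r : ℤ_[p]) (y : L),
      ((r : ℚ_[p])) • ((1 : ℚ_[p]) ⊗ₜ[ℤ_[p]] y) = (1 : ℚ_[p]) ⊗ₜ[ℤ_[p]] (r • y) := by
    intro r y
    rw [TensorProduct.tmul_smul, ← PadicInt.algebraMap_apply, algebraMap_smul]
  have hsmp : ∀ (k : ℕ) (y : L),
      ((p : ℚ_[p]) ^ k) • ((1 : ℚ_[p]) ⊗ₜ[ℤ_[p]] y)
        = (1 : ℚ_[p]) ⊗ₜ[ℤ_[p]] (((p : ℤ_[p]) ^ k) • y) := by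
    intro k y
    have := hsm ((p : ℤ_[p]) ^ k) y
    push_cast at this
    exact this
  -- main induction
  have key : ∀ (k : ℕ) (x : ℚ_[p] ⊗[ℤ_[p]] L),
      (∀ u ∈ Set.range fun a : L => (1 : ℚ_[p]) ⊗ₜ[ℤ_[p]] a,
        ⁅x, u⁆ ∈ Set.range fun a : L => (1 : ℚ_[p]) ⊗ₜ[ℤ_[p]] a) →
      ((p : ℚ_[p]) ^ k • x ∈ Set.range fun a : L => (1 : ℚ_[p]) ⊗ₜ[ℤ_[p]] a) →
      x ∈ Set.range fun a : L => (1 : ℚ_[p]) ⊗ₜ[ℤ_[p]] a := by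
    intro k
    induction k with
    | zero => intro x _ hx; simpa using hx
    | succ k ih =>
      intro x hx hpk
      obtain ⟨u, hu⟩ := hpk
      have hu' : (1 : ℚ_[p]) ⊗ₜ[ℤ_[p]] u = (p : ℚ_[p]) ^ (k + 1) • x := hu
      -- for every w, ⁅u, w⁆ ∈ pL
      have hcen : ∀ w : L, ∃ z : L, ⁅u, w⁆ = (p : ℤ_[p]) • z := by
        intro w
        obtain ⟨v, hv⟩ := hx ((1 : ℚ_[p]) ⊗ₜ[ℤ_[p]] w) ⟨w, rfl⟩
        have hv' : (1 : ℚ_[p]) ⊗ₜ[ℤ_[p]] v = ⁅x, (1 : ℚ_[p]) ⊗ₜ[ℤ_[p]] w⁆ := hv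
        have heq : (1 : ℚ_[p]) ⊗ₜ[ℤ_[p]] ⁅u, w⁆
            = (1 : ℚ_[p]) ⊗ₜ[ℤ_[p]] (((p : ℤ_[p]) ^ (k + 1)) • v) := by
          calc (1 : ℚ_[p]) ⊗ₜ[ℤ_[p]] ⁅u, w⁆
              = ⁅(1 : ℚ_[p]) ⊗ₜ[ℤ_[p]] u, (1 : ℚ_[p]) ⊗ₜ[ℤ_[p]] w⁆ := (hbr u w).symm
            _ = ⁅(p : ℚ_[p]) ^ (k + 1) • x, (1 : ℚ_[p]) ⊗ₜ[ℤ_[p]] w⁆ := by rw [hu']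
            _ = (p : ℚ_[p]) ^ (k + 1) • ⁅x, (1 : ℚ_[p]) ⊗ₜ[ℤ_[p]] w⁆ := smul_lie _ _ _
            _ = (p : ℚ_[p]) ^ (k + 1) • ((1 : ℚ_[p]) ⊗ₜ[ℤ_[p]] v) := by rw [hv']
            _ = (1 : ℚ_[p]) ⊗ₜ[ℤ_[p]] (((p : ℤ_[p]) ^ (k + 1)) • v) := hsmp (k + 1) v
        have h3 : ⁅u, w⁆ = ((p : ℤ_[p]) ^ (k + 1)) • v := hinj _ _ heq
        exact ⟨(p : ℤ_[p]) ^ k • v, by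
          rw [h3, ← smul_assoc, smul_eq_mul, pow_succ, mul_comm]⟩
      obtain ⟨z, hz⟩ := hcentre u hcen
      -- p^(k+1) • x = 1 ⊗ (p • z)  ⇒  p^k • x = 1 ⊗ z
      have h4 : (p : ℚ_[p]) • ((p : ℚ_[p]) ^ k • x)
          = (p : ℚ_[p]) • ((1 : ℚ_[p]) ⊗ₜ[ℤ_[p]] z) := by
        calc (p : ℚ_[p]) • ((p : ℚ_[p]) ^ k • x)
            = (p : ℚ_[p]) ^ (k + 1) • x := by rw [smul_smul, ← pow_succ']
          _ = (1 : ℚ_[p]) ⊗ₜ[ℤ_[p]] u := hu'.symm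
          _ = (1 : ℚ_[p]) ⊗ₜ[ℤ_[p]] ((p : ℤ_[p]) • z) := by rw [← hz]
          _ = (p : ℚ_[p]) • ((1 : ℚ_[p]) ⊗ₜ[ℤ_[p]] z) := by
              have := hsmp 1 z; simpa using this.symm
      have h6 : (p : ℚ_[p]) ^ k • x = (1 : ℚ_[p]) ⊗ₜ[ℤ_[p]] z :=
        smul_right_injective _ hp0 h4
      exact ih x hx ⟨z, h6.symm⟩
  ext x
  simp only [Set.mem_setOf_eq]
  constructor
  · intro hx
    -- find a common denominator
    choose n hn using fun i => padic_denom p (B.repr x i)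
    set N := Finset.univ.sup n with hN
    have hcoef : ∀ i, ‖(p : ℚ_[p]) ^ N * B.repr x i‖ ≤ 1 := by
      intro i
      have hNi : n i ≤ N := Finset.le_sup (Finset.mem_univ i)
      have h1 : ‖(p : ℚ_[p])‖ ^ N ≤ ‖(p : ℚ_[p])‖ ^ (n i) :=
        pow_le_pow_of_le_one (norm_nonneg _) Padic.norm_p_lt_one.le hNi
      calc ‖(p : ℚ_[p]) ^ N * B.repr x i‖
          = ‖(p : ℚ_[p])‖ ^ N * ‖B.repr x i‖ := by rw [norm_mul, norm_pow]
        _ ≤ ‖(p : ℚ_[p])‖ ^ (n i) * ‖B.repr x i‖ :=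
            mul_le_mul_of_nonneg_right h1 (norm_nonneg _)
        _ = ‖(p : ℚ_[p]) ^ (n i) * B.repr x i‖ := by rw [norm_mul, norm_pow]
        _ ≤ 1 := hn i
    let d : _ → ℤ_[p] := fun i => ⟨(p : ℚ_[p]) ^ N * B.repr x i, hcoef i⟩
    set a : L := ∑ i, d i • b i with ha
    have hna : (p : ℚ_[p]) ^ N • x = (1 : ℚ_[p]) ⊗ₜ[ℤ_[p]] a := by
      calc (p : ℚ_[p]) ^ N • x
          = (p : ℚ_[p]) ^ N • ∑ i, B.repr x i • B i := by rw [B.sum_repr]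
        _ = ∑ i, ((p : ℚ_[p]) ^ N * B.repr x i) • B i := by
            rw [Finset.smul_sum]; simp [smul_smul]
        _ = ∑ i, (1 : ℚ_[p]) ⊗ₜ[ℤ_[p]] (d i • b i) := by
            refine Finset.sum_congr rfl fun i _ => ?_
            rw [hB, Module.Basis.baseChange_apply]
            exact hsm (d i) (b i)
        _ = (1 : ℚ_[p]) ⊗ₜ[ℤ_[p]] a := by rw [ha, TensorProduct.tmul_sum]
    exact key N x hx ⟨a, hna.symm⟩
  · rintro ⟨a, rfl⟩ u hu
    obtain ⟨w, rfl⟩ := hu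
    exact ⟨⁅a, w⁆, (hbr a w).symm⟩
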